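/- Let A be a ℚ-vector space, μ : A → ℂ a map, and n ≥ 2. Then I^μ_{n+1} vanishes identically if and only if the symmetric functional I^μ_n is additive in each argument (hence I^μ_n ∈ Σ_n(A)). -/

import Mathlib

open Finset

/-- The `k`-th interference functional of `μ`:
`I^μ_k(a₁,…,a_k) = Σ_S (−1)^{k−|S|} μ(Σ_{i∈S} a_i)`, where `S` ranges over
non-empty subsets of `{1,…,k}`. -/
noncomputable def interference {A : Type*} [AddCommGroup A] (μ : A → ℂ) {k : ℕ}
    (a : Fin k → A) : ℂ :=
  ∑ S ∈ (Finset.univ : Finset (Fin k)).powerset.filter (fun S => S.Nonempty),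
    (-1 : ℂ) ^ (k - S.card) * μ (∑ i ∈ S, a i)

/-- `μ ∈ 𝓜_n(A)`: the order-`n` sum rule
`μ(a₁+⋯+a_{n+1}) = Σ_S (−1)^{n−|S|} μ(Σ_{i∈S} a_i)`, with `S` running over the
subsets of `{1,…,n+1}` satisfying `1 ≤ |S| ≤ n`. -/
def MemMeasureSpace {A : Type*} [AddCommGroup A] (n : ℕ) (μ : A → ℂ) : Prop :=
  ∀ a : Fin (n + 1) → A,
    μ (∑ i, a i) =
      ∑ S ∈ (Finset.univ : Finset (Fin (n + 1))).powerset.filter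
          (fun S => S.Nonempty ∧ S.card ≤ n),
        (-1 : ℂ) ^ (n - S.card) * μ (∑ i ∈ S, a i)

/-- Total symmetry of a functional of `n` arguments. -/
def IsTotallySymmetric {A : Type*} {n : ℕ} (Φ : (Fin n → A) → ℂ) : Prop :=
  ∀ (σ : Equiv.Perm (Fin n)) (a : Fin n → A), Φ (a ∘ σ) = Φ a

/-- Additivity in each argument of a functional of `n` arguments. -/
def IsMultiadditive {A : Type*} [AddCommGroup A] {n : ℕ} (Φ : (Fin n → A) → ℂ) : Prop :=
  ∀ (i : Fin n) (a : Fin n → A) (x y : A),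
    Φ (Function.update a i (x + y)) =
      Φ (Function.update a i x) + Φ (Function.update a i y)

/-- The polarization map
`Π_n(μ)(a₁,…,a_n) = (1/(2ⁿ n!)) Σ_{z∈{1,−1}ⁿ} z₁⋯z_n · μ(z₁a₁+⋯+z_n a_n)`,
the sum running over all sign choices `z ∈ {1,−1}ⁿ`. -/
noncomputable def polarization {A : Type*} [AddCommGroup A] (μ : A → ℂ) {n : ℕ}
    (a : Fin n → A) : ℂ :=
  (1 / (2 ^ n * n.factorial : ℂ)) *
    ∑ z : Fin n → Bool,
      (∏ i, if z i then (1 : ℂ) else -1) * μ (∑ i, if z i then a i else -a i)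

lemma sum_powerset_map {α β M : Type*} [AddCommMonoid M] [DecidableEq α] [DecidableEq β]
    (e : α ↪ β) (s : Finset α) (f : Finset β → M) :
    ∑ T ∈ s.powerset, f (T.map e) = ∑ U ∈ (s.map e).powerset, f U := by
  refine Finset.sum_bij' (fun T _ => T.map e) (fun U _ => s.filter (fun a => e a ∈ U))
    ?_ ?_ ?_ ?_ ?_
  · intro T hT
    simp only [mem_powerset] at hT ⊢
    exact map_subset_map.2 hT
  · intro U hU
    simp only [mem_powerset] at hU ⊢
    exact filter_subset _ _
  · intro T hT
    simp only [mem_powerset] at hT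
    ext a
    simp only [mem_filter, mem_map]
    constructor
    · rintro ⟨_, b, hb, h⟩; rwa [← e.injective h]
    · intro ha; exact ⟨hT ha, a, ha, rfl⟩
  · intro U hU
    simp only [mem_powerset] at hU
    ext b
    simp only [mem_map, mem_filter]
    constructor
    · rintro ⟨a, ⟨_, hb⟩, rfl⟩; exact hb
    · intro hb
      obtain ⟨a, ha, rfl⟩ := mem_map.1 (hU hb)
      exact ⟨a, ⟨ha, hb⟩, rfl⟩
  · intro T hT
    rfl


noncomputable def Jfun {A : Type*} [AddCommGroup A] (μ : A → ℂ) {k : ℕ}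
    (x : A) (a : Fin k → A) : ℂ :=
  ∑ S ∈ (Finset.univ : Finset (Fin k)).powerset,
    (-1 : ℂ) ^ (k - S.card) * μ (x + ∑ i ∈ S, a i)

lemma Jfun_zero {A : Type*} [AddCommGroup A] (μ : A → ℂ) {k : ℕ} (a : Fin k → A) :
    Jfun μ 0 a = interference μ a + (-1 : ℂ) ^ k * μ 0 := by
  unfold Jfun interference
  simp only [zero_add]
  rw [← Finset.sum_filter_add_sum_filter_not
    ((Finset.univ : Finset (Fin k)).powerset) (fun S => S.Nonempty)]
  congr 1
  have : ((Finset.univ : Finset (Fin k)).powerset.filter (fun S => ¬ S.Nonempty)) = {∅} := by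
    ext S
    simp [Finset.not_nonempty_iff_eq_empty]
  rw [this, Finset.sum_singleton]
  simp

lemma Jfun_snoc {A : Type*} [AddCommGroup A] (μ : A → ℂ) {k : ℕ}
    (x s : A) (a : Fin k → A) :
    Jfun μ x (Fin.snoc a s) = Jfun μ (x + s) a - Jfun μ x a := by
  unfold Jfun
  rw [show (Finset.univ : Finset (Fin (k+1))) =
      Finset.cons (Fin.last k) (univ.map Fin.castSuccEmb) (by simp [map_eq_image]) from
    Fin.univ_castSuccEmb k]
  rw [Finset.cons_eq_insert, Finset.sum_powerset_insert (by simp [map_eq_image])]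
  rw [← sum_powerset_map Fin.castSuccEmb univ
      (fun S => (-1 : ℂ) ^ (k + 1 - S.card) * μ (x + ∑ i ∈ S, Fin.snoc a s i)),
    ← sum_powerset_map Fin.castSuccEmb univ
      (fun S => (-1 : ℂ) ^ (k + 1 - (insert (Fin.last k) S).card) *
        μ (x + ∑ i ∈ insert (Fin.last k) S, Fin.snoc a s i))]
  have hsum : ∀ T : Finset (Fin k), ∑ i ∈ T.map Fin.castSuccEmb, Fin.snoc a s i = ∑ i ∈ T, a i := by
    intro T
    rw [Finset.sum_map]
    refine Finset.sum_congr rfl fun i _ => ?_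
    rw [show Fin.castSuccEmb i = Fin.castSucc i from rfl, Fin.snoc_castSucc]
  have hne : ∀ T : Finset (Fin k), Fin.last k ∉ T.map Fin.castSuccEmb := by
    intro T
    simp only [mem_map]
    rintro ⟨i, _, h⟩
    exact (Fin.castSucc_lt_last i).ne h
  have h1 : ∑ T ∈ (univ : Finset (Fin k)).powerset,
      (-1 : ℂ) ^ (k + 1 - (T.map Fin.castSuccEmb).card) *
        μ (x + ∑ i ∈ T.map Fin.castSuccEmb, Fin.snoc a s i) =
      - ∑ S ∈ (univ : Finset (Fin k)).powerset, (-1 : ℂ) ^ (k - S.card) * μ (x + ∑ i ∈ S, a i) := by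
    rw [← Finset.sum_neg_distrib]
    refine Finset.sum_congr rfl fun T hT => ?_
    rw [hsum T, Finset.card_map]
    have hc : T.card ≤ k := by
      simpa using Finset.card_le_card (Finset.mem_powerset.1 hT)
    rw [show k + 1 - T.card = (k - T.card) + 1 by omega]
    ring
  have h2 : ∑ T ∈ (univ : Finset (Fin k)).powerset,
      (-1 : ℂ) ^ (k + 1 - (insert (Fin.last k) (T.map Fin.castSuccEmb)).card) *
        μ (x + ∑ i ∈ insert (Fin.last k) (T.map Fin.castSuccEmb), Fin.snoc a s i) =
      ∑ S ∈ (univ : Finset (Fin k)).powerset,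
        (-1 : ℂ) ^ (k - S.card) * μ (x + s + ∑ i ∈ S, a i) := by
    refine Finset.sum_congr rfl fun T hT => ?_
    rw [Finset.card_insert_of_notMem (hne T), Finset.card_map,
      Finset.sum_insert (hne T), hsum T]
    simp only [Fin.snoc_last]
    rw [show k + 1 - (T.card + 1) = k - T.card by omega]
    ring_nf
    rw [show x + s + ∑ i ∈ T, a i = x + (s + ∑ i ∈ T, a i) by abel]
  rw [h1, h2]
  ring

lemma interference_snoc {A : Type*} [AddCommGroup A] (μ : A → ℂ) {k : ℕ}
    (a : Fin k → A) (t : A) :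
    interference μ (Fin.snoc a t) = Jfun μ t a - interference μ a := by
  have h0 : Jfun μ 0 (Fin.snoc a t) = Jfun μ (0 + t) a - Jfun μ 0 a := Jfun_snoc μ 0 t a
  rw [Jfun_zero, Jfun_zero, zero_add] at h0
  have : ((-1 : ℂ)) ^ (k + 1) = -((-1 : ℂ) ^ k) := by ring
  rw [this] at h0
  linear_combination h0

lemma interference_key {A : Type*} [AddCommGroup A] (μ : A → ℂ) {k : ℕ}
    (a : Fin k → A) (x y : A) :
    interference μ (Fin.snoc (Fin.snoc a x) y) =
      interference μ (Fin.snoc a (x + y)) - interference μ (Fin.snoc a x)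
        - interference μ (Fin.snoc a y) := by
  rw [interference_snoc μ (Fin.snoc a x) y, Jfun_snoc, interference_snoc,
    interference_snoc, interference_snoc, show y + x = x + y from add_comm y x]
  ring

lemma interference_comp_perm {A : Type*} [AddCommGroup A] (μ : A → ℂ) {k : ℕ}
    (σ : Equiv.Perm (Fin k)) (a : Fin k → A) :
    interference μ (a ∘ σ) = interference μ a := by
  unfold interference
  refine Finset.sum_bij' (fun S _ => S.image σ) (fun S _ => S.image σ.symm) ?_ ?_ ?_ ?_ ?_
  · intro S hS
    simp only [mem_filter, mem_powerset] at hS ⊢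
    exact ⟨fun x _ => mem_univ x, hS.2.image σ⟩
  · intro S hS
    simp only [mem_filter, mem_powerset] at hS ⊢
    exact ⟨fun x _ => mem_univ x, hS.2.image σ.symm⟩
  · intro S _
    simp [Finset.image_image, Function.comp_def]
  · intro S _
    simp [Finset.image_image, Function.comp_def]
  · intro S _
    rw [Finset.card_image_of_injective _ σ.injective,
      Finset.sum_image (fun i _ j _ h => σ.injective h)]
    rfl

lemma update_last_eq_snoc {A : Type*} {k : ℕ} (c : Fin (k + 1) → A) (z : A) :
    Function.update c (Fin.last k) z = Fin.snoc (Fin.init c) z := by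
  conv_lhs => rw [← Fin.snoc_init_self c]
  rw [Fin.update_snoc_last]


/-- For `n ≥ 2`, `I^μ_{n+1}` vanishes identically iff the (automatically symmetric)
functional `I^μ_n` is additive in each argument, i.e. `I^μ_n ∈ Σ_n(A)`. -/
theorem interference_succ_eq_zero_iff_multiadditive {A : Type*} [AddCommGroup A] [Module ℚ A]
    (μ : A → ℂ) (n : ℕ) (hn : 2 ≤ n) :
    (∀ a : Fin (n + 1) → A, interference μ a = 0) ↔
      IsMultiadditive (fun a : Fin n → A => interference μ a) := by
  obtain ⟨k, rfl⟩ : ∃ k, n = k + 1 := ⟨n - 1, by omega⟩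
  constructor
  · intro h i a x y
    set σ := Equiv.swap i (Fin.last k) with hσ
    have hupdate : ∀ z : A,
        Function.update a i z = (Function.update (a ∘ σ) (Fin.last k) z) ∘ σ := by
      intro z
      funext j
      by_cases hj : j = i
      · subst hj
        rw [hσ]
        simp only [Function.comp_apply, Function.update_self]
        rw [Equiv.swap_apply_left, Function.update_self]
      · have h1 : σ j ≠ Fin.last k := by
          intro hc
          apply hj
          have := congrArg σ.symm hc
          simpa [hσ] using this
        simp only [Function.comp_apply, Function.update_of_ne h1,
          Function.update_of_ne hj]
        simp [hσ]
    have hswap : ∀ z : A, interference μ (Function.update a i z) =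
        interference μ (Fin.snoc (Fin.init (a ∘ σ)) z) := by
      intro z
      rw [hupdate z, interference_comp_perm, update_last_eq_snoc]
    simp only
    rw [hswap (x + y), hswap x, hswap y]
    have hkey := interference_key μ (Fin.init (a ∘ σ)) x y
    rw [h (Fin.snoc (Fin.snoc (Fin.init (a ∘ σ)) x) y)] at hkey
    linear_combination -hkey
  · intro h b
    have hb : b = Fin.snoc (Fin.snoc (Fin.init (Fin.init b))
        (Fin.init b (Fin.last k))) (b (Fin.last (k + 1))) := by
      rw [Fin.snoc_init_self, Fin.snoc_init_self]
    rw [hb, interference_key]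
    set a := Fin.init (Fin.init b)
    set x := Fin.init b (Fin.last k)
    set y := b (Fin.last (k + 1))
    have hm := h (Fin.last k) (Fin.snoc a x) x y
    simp only [Fin.update_snoc_last] at hm
    linear_combination hm
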